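/- Let λ, σ, ϱ > 0 and let α = min{λ, σ}. Suppose Ψ, Φ : [0, ∞) → E = ℓ² × ℓ² are differentiable and both satisfy the differential equation d/dt (u, v) = (-Au - λu + F(u) - v, ϱu - σv), where A is the discrete Laplacian (Au)_i = -u_{i-1} + 2u_i - u_{i+1} and F is a Nemytskii operator satisfying (F(u) - F(v), u - v) ≤ -γ‖u - v‖² with γ > 0. With the inner product on E given by ((u₁,v₁),(u₂,v₂))_E = (u₁,u₂) + (1/ϱ)(v₁,v₂), one has d/dt ‖Ψ(t) - Φ(t)‖²_E ≤ -2α ‖Ψ(t) - Φ(t)‖²_E for all t ≥ 0. -/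

import Mathlib

open scoped RealInnerProductSpace

set_option maxHeartbeats 1000000

private lemma summable_sq (w : lp (fun _ : ℤ => ℝ) 2) :
    Summable (fun i : ℤ => w i * w i) := by
  simpa [RCLike.inner_apply, conj_trivial, pow_two] using lp.summable_inner (𝕜 := ℝ) w w

private lemma summable_cross (w : lp (fun _ : ℤ => ℝ) 2) :
    Summable (fun i : ℤ => w i * w (i + 1)) := by
  have hs := summable_sq w
  have hs1 : Summable (fun i : ℤ => w (i + 1) * w (i + 1)) :=
    (Equiv.addRight (1 : ℤ)).summable_iff.2 hs
  refine Summable.of_abs ?_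
  refine Summable.of_nonneg_of_le (fun i => abs_nonneg _)
    (fun i => ?_) (((hs.add hs1).mul_left (1/2 : ℝ)))
  rw [abs_mul]
  nlinarith [sq_nonneg (|w i| - |w (i + 1)|), sq_abs (w i), sq_abs (w (i + 1)),
    abs_nonneg (w i), abs_nonneg (w (i + 1))]

private lemma lapl_nonneg (w : lp (fun _ : ℤ => ℝ) 2) :
    0 ≤ ∑' i : ℤ, (-w (i - 1) + 2 * w i - w (i + 1)) * w i := by
  have hs := summable_sq w
  have hs1 : Summable (fun i : ℤ => w (i + 1) * w (i + 1)) :=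
    (Equiv.addRight (1 : ℤ)).summable_iff.2 hs
  have hc := summable_cross w
  have hc' : Summable (fun i : ℤ => w (i - 1) * w i) := by
    have h := (Equiv.subRight (1 : ℤ)).summable_iff.2 hc
    exact h.congr fun i => by simp
  set S := ∑' i : ℤ, w i * w i with hS
  set C := ∑' i : ℤ, w i * w (i + 1) with hC
  have e1 : ∑' i : ℤ, w (i - 1) * w i = C := by
    have := (Equiv.subRight (1 : ℤ)).tsum_eq (fun i : ℤ => w i * w (i + 1))
    simpa using this
  have e2 : ∑' i : ℤ, w (i + 1) * w (i + 1) = S := by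
    have := (Equiv.addRight (1 : ℤ)).tsum_eq (fun i : ℤ => w i * w i)
    simpa using this
  have hL : HasSum (fun i : ℤ => (-w (i - 1) + 2 * w i - w (i + 1)) * w i)
      (S + S - (∑' i : ℤ, w (i - 1) * w i) - C) := by
    have := ((hs.hasSum.add hs.hasSum).sub hc'.hasSum).sub hc.hasSum
    refine HasSum.congr_fun this fun i => by ring
  have hR : HasSum (fun i : ℤ => (w i - w (i + 1)) ^ 2)
      (S - 2 * C + (∑' i : ℤ, w (i + 1) * w (i + 1))) := by
    have := (hs.hasSum.sub ((hc.hasSum).mul_left 2)).add hs1.hasSum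
    refine HasSum.congr_fun this fun i => by ring
  have key : ∑' i : ℤ, (-w (i - 1) + 2 * w i - w (i + 1)) * w i
      = ∑' i : ℤ, (w i - w (i + 1)) ^ 2 := by
    rw [hL.tsum_eq, hR.tsum_eq, e1, e2]; ring
  rw [key]
  exact tsum_nonneg fun i => sq_nonneg _

/-- For the FitzHugh-Nagumo lattice system with λ, σ, ϱ > 0,
α = min{λ, σ}, discrete Laplacian A and one-sided dissipative Nemytskii operator F,
the squared E-norm ‖Ψ(t) - Φ(t)‖²_E = ‖u - ũ‖² + (1/ϱ)‖v - ṽ‖² of the difference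
of two solutions satisfies d/dt ‖Ψ(t) - Φ(t)‖²_E ≤ -2α ‖Ψ(t) - Φ(t)‖²_E for t ≥ 0. -/
theorem fhn_difference_derivative_decay
    (lam sig rho γ : ℝ) (hlam : 0 < lam) (hsig : 0 < sig) (hrho : 0 < rho) (hγ : 0 < γ)
    (A F : lp (fun _ : ℤ => ℝ) 2 → lp (fun _ : ℤ => ℝ) 2)
    (hA : ∀ w i, A w i = -w (i - 1) + 2 * w i - w (i + 1))
    (hF : ∀ w w' : lp (fun _ : ℤ => ℝ) 2, ⟪F w - F w', w - w'⟫ ≤ -γ * ‖w - w'‖ ^ 2)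
    (u v u' v' : ℝ → lp (fun _ : ℤ => ℝ) 2)
    (hu : ∀ t ≥ (0 : ℝ), HasDerivAt u (-A (u t) - lam • u t + F (u t) - v t) t)
    (hv : ∀ t ≥ (0 : ℝ), HasDerivAt v (rho • u t - sig • v t) t)
    (hu' : ∀ t ≥ (0 : ℝ), HasDerivAt u' (-A (u' t) - lam • u' t + F (u' t) - v' t) t)
    (hv' : ∀ t ≥ (0 : ℝ), HasDerivAt v' (rho • u' t - sig • v' t) t) :
    ∀ t ≥ (0 : ℝ), ∀ d : ℝ,
      HasDerivAt (fun s => ‖u s - u' s‖ ^ 2 + (1 / rho) * ‖v s - v' s‖ ^ 2) d t →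
      d ≤ -2 * min lam sig *
        (‖u t - u' t‖ ^ 2 + (1 / rho) * ‖v t - v' t‖ ^ 2) := by
  intro t ht d hd
  -- difference of solutions
  set w : lp (fun _ : ℤ => ℝ) 2 := u t - u' t with hw_def
  set z : lp (fun _ : ℤ => ℝ) 2 := v t - v' t with hz_def
  -- the Laplacian difference is nonnegative against w
  have hAlin : A (u t) - A (u' t) = A w := by
    apply lp.ext
    funext i
    have h1 : (A (u t) - A (u' t)) i = A (u t) i - A (u' t) i := by
      simp [lp.coeFn_sub]
    have h2 : w i = u t i - u' t i := by simp [hw_def, lp.coeFn_sub]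
    have h3 : w (i - 1) = u t (i - 1) - u' t (i - 1) := by simp [hw_def, lp.coeFn_sub]
    have h4 : w (i + 1) = u t (i + 1) - u' t (i + 1) := by simp [hw_def, lp.coeFn_sub]
    rw [h1, hA, hA, hA, h2, h3, h4]; ring
  have hApos : (0 : ℝ) ≤ ⟪A (u t) - A (u' t), w⟫ := by
    rw [hAlin, lp.inner_eq_tsum]
    have : ∀ i : ℤ, (⟪A w i, w i⟫ : ℝ) = (-w (i - 1) + 2 * w i - w (i + 1)) * w i := by
      intro i
      rw [hA]
      simp [RCLike.inner_apply, conj_trivial]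
      ring
    rw [tsum_congr this]
    exact lapl_nonneg w
  -- derivatives of w and z
  have hdw : HasDerivAt (fun s => u s - u' s)
      ((-A (u t) - lam • u t + F (u t) - v t) - (-A (u' t) - lam • u' t + F (u' t) - v' t)) t :=
    (hu t ht).sub (hu' t ht)
  have hdz : HasDerivAt (fun s => v s - v' s)
      ((rho • u t - sig • v t) - (rho • u' t - sig • v' t)) t :=
    (hv t ht).sub (hv' t ht)
  set Dw := (-A (u t) - lam • u t + F (u t) - v t) - (-A (u' t) - lam • u' t + F (u' t) - v' t)
    with hDw_def
  set Dz := (rho • u t - sig • v t) - (rho • u' t - sig • v' t) with hDz_def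
  have h1 : HasDerivAt (fun s => (⟪u s - u' s, u s - u' s⟫ : ℝ)) (⟪w, Dw⟫ + ⟪Dw, w⟫) t :=
    hdw.inner ℝ hdw
  have h2 : HasDerivAt (fun s => (⟪v s - v' s, v s - v' s⟫ : ℝ)) (⟪z, Dz⟫ + ⟪Dz, z⟫) t :=
    hdz.inner ℝ hdz
  have hE : HasDerivAt (fun s => ‖u s - u' s‖ ^ 2 + (1 / rho) * ‖v s - v' s‖ ^ 2)
      ((⟪w, Dw⟫ + ⟪Dw, w⟫) + (1 / rho) * (⟪z, Dz⟫ + ⟪Dz, z⟫)) t := by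
    have : (fun s => ‖u s - u' s‖ ^ 2 + (1 / rho) * ‖v s - v' s‖ ^ 2)
        = (fun s => (⟪u s - u' s, u s - u' s⟫ : ℝ) + (1 / rho) * ⟪v s - v' s, v s - v' s⟫) := by
      funext s
      rw [real_inner_self_eq_norm_sq, real_inner_self_eq_norm_sq]
    rw [this]
    exact h1.add (h2.const_mul (1 / rho))
  have hd_eq : d = (⟪w, Dw⟫ + ⟪Dw, w⟫) + (1 / rho) * (⟪z, Dz⟫ + ⟪Dz, z⟫) :=
    hd.unique hE
  -- compute the inner products
  have hDw_eq : Dw = -(A (u t) - A (u' t)) - lam • w + (F (u t) - F (u' t)) - z := by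
    rw [hDw_def, hw_def, hz_def, smul_sub]
    abel
  have hDz_eq : Dz = rho • w - sig • z := by
    rw [hDz_def, hw_def, hz_def, smul_sub, smul_sub]
    abel
  have hiw : (⟪Dw, w⟫ : ℝ)
      = -⟪A (u t) - A (u' t), w⟫ - lam * ⟪w, w⟫ + ⟪F (u t) - F (u' t), w⟫ - ⟪z, w⟫ := by
    rw [hDw_eq]
    simp only [inner_sub_left, inner_add_left, inner_neg_left, real_inner_smul_left]
  have hiz : (⟪Dz, z⟫ : ℝ) = rho * ⟪w, z⟫ - sig * ⟪z, z⟫ := by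
    rw [hDz_eq]
    simp only [inner_sub_left, real_inner_smul_left]
  have hFb : (⟪F (u t) - F (u' t), w⟫ : ℝ) ≤ -γ * ‖w‖ ^ 2 := by
    rw [hw_def]; exact hF (u t) (u' t)
  have hww : (⟪w, w⟫ : ℝ) = ‖w‖ ^ 2 := real_inner_self_eq_norm_sq w
  have hzz : (⟪z, z⟫ : ℝ) = ‖z‖ ^ 2 := real_inner_self_eq_norm_sq z
  have hcomm : (⟪z, w⟫ : ℝ) = ⟪w, z⟫ := real_inner_comm w z
  have hcomm2 : (⟪w, Dw⟫ : ℝ) = ⟪Dw, w⟫ := real_inner_comm Dw w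
  have hcomm3 : (⟪z, Dz⟫ : ℝ) = ⟪Dz, z⟫ := real_inner_comm Dz z
  have hrho1 : (1 / rho) * rho = 1 := by field_simp
  have hα1 : min lam sig ≤ lam := min_le_left _ _
  have hα2 : min lam sig ≤ sig := min_le_right _ _
  have hn1 : (0 : ℝ) ≤ ‖w‖ ^ 2 := sq_nonneg _
  have hn2 : (0 : ℝ) ≤ ‖z‖ ^ 2 := sq_nonneg _
  have hn2' : (0 : ℝ) ≤ (1 / rho) * ‖z‖ ^ 2 := by positivity
  rw [hd_eq, hcomm2, hcomm3, hiw, hiz, hww, hzz, hcomm]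
  have hγw : -γ * ‖w‖ ^ 2 ≤ 0 := by nlinarith
  have expand : (1 / rho) * ((rho * ⟪w, z⟫ - sig * ‖z‖ ^ 2) + (rho * ⟪w, z⟫ - sig * ‖z‖ ^ 2))
      = 2 * ⟪w, z⟫ - 2 * sig * ((1 / rho) * ‖z‖ ^ 2) := by
    field_simp
    ring
  rw [expand]
  nlinarith [mul_le_mul_of_nonneg_right hα1 hn1,
    mul_le_mul_of_nonneg_right hα2 hn2', hApos, hFb, hγw]
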